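/- Let C and C̃ be n×n nonnegative cross-holdings matrices with corresponding diagonal self-holdings matrices Ĉ and Ĉ̃, where every diagonal entry of Ĉ and Ĉ̃ is at least r > 0. Write Ẽ = C̃ - C and Ê = Ĉ̃ - Ĉ, and suppose ‖Ẽ‖ + ‖Ê‖ < ε in the induced ℓ1 operator norm. Then ‖Ĉ̃(I-C̃)^{-1} - Ĉ(I-C)^{-1}‖ ≤ ε/r. -/

import Mathlib

open Matrix

attribute [local instance] Matrix.linftyOpNormedRing Matrix.linftyOpNormedAlgebra

/-- Induced ℓ1 operator norm of a square real matrix: max absolute column sum. -/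
noncomputable def opNormL1 {n : ℕ} (M : Matrix (Fin n) (Fin n) ℝ) : ℝ :=
  ⨆ j, ∑ i, |M i j|

lemma normRowsLe {n : ℕ} (M : Matrix (Fin n) (Fin n) ℝ) (c : ℝ) (hc : 0 ≤ c)
    (h : ∀ i, ∑ j, ‖M i j‖ ≤ c) : ‖M‖ ≤ c := by
  rw [Matrix.linfty_opNorm_def]
  have : (Finset.univ.sup fun i => ∑ j, ‖M i j‖₊) ≤ ⟨c, hc⟩ := by
    apply Finset.sup_le; intro i _
    refine NNReal.coe_le_coe.mp ?_; push_cast; exact h i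
  exact_mod_cast this

lemma rowSumLeNorm {n : ℕ} (M : Matrix (Fin n) (Fin n) ℝ) (i : Fin n) :
    ∑ j, ‖M i j‖ ≤ ‖M‖ := by
  rw [Matrix.linfty_opNorm_def]
  have h2 : (∑ k, ‖M i k‖₊) ≤ Finset.univ.sup fun i => ∑ j, ‖M i j‖₊ :=
    Finset.le_sup (f := fun i => ∑ j, ‖M i j‖₊) (Finset.mem_univ i)
  calc ∑ j, ‖M i j‖ = ((∑ k, ‖M i k‖₊ : NNReal) : ℝ) := by push_cast; rfl
    _ ≤ _ := NNReal.coe_le_coe.mpr h2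

lemma abs_entry_le_norm {n : ℕ} (M : Matrix (Fin n) (Fin n) ℝ) (i j : Fin n) :
    |M i j| ≤ ‖M‖ := by
  refine le_trans ?_ (rowSumLeNorm M i)
  calc |M i j| = ‖M i j‖ := (Real.norm_eq_abs _).symm
    _ ≤ ∑ k, ‖M i k‖ := Finset.single_le_sum (f := fun k => ‖M i k‖)
        (fun k _ => norm_nonneg _) (Finset.mem_univ j)

lemma opNormL1_eq {n : ℕ} (hn : 0 < n) (M : Matrix (Fin n) (Fin n) ℝ) :
    opNormL1 M = ‖Mᵀ‖ := by
  have : Nonempty (Fin n) := ⟨⟨0, hn⟩⟩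
  apply le_antisymm
  · apply ciSup_le
    intro j
    calc ∑ i, |M i j| = ∑ i, ‖Mᵀ j i‖ := by
          simp [Matrix.transpose_apply, Real.norm_eq_abs]
      _ ≤ ‖Mᵀ‖ := rowSumLeNorm _ j
  · have h0 : (0:ℝ) ≤ opNormL1 M :=
      le_ciSup_of_le (Set.Finite.bddAbove (Set.finite_range _)) ⟨0, hn⟩
        (Finset.sum_nonneg fun i _ => abs_nonneg _)
    apply normRowsLe _ _ h0
    intro i
    calc ∑ j, ‖Mᵀ i j‖ = ∑ j, |M j i| := by
          simp [Matrix.transpose_apply, Real.norm_eq_abs]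
      _ ≤ opNormL1 M := le_ciSup_of_le (Set.Finite.bddAbove (Set.finite_range _)) i le_rfl

lemma neumann {n : ℕ} (hn : 0 < n) (r : ℝ) (hr : 0 < r) (A : Matrix (Fin n) (Fin n) ℝ)
    (hpos : ∀ i j, 0 ≤ A i j) (hrow : ∀ i, ∑ j, A i j ≤ 1 - r) :
    (∀ i j, 0 ≤ (1 - A)⁻¹ i j) ∧ (1 - A) * (1 - A)⁻¹ = 1 ∧ (1 - A)⁻¹ * (1 - A) = 1 ∧
      ‖A‖ ≤ 1 - r := by
  have hne : Nonempty (Fin n) := ⟨⟨0, hn⟩⟩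
  have h1r : (0:ℝ) ≤ 1 - r :=
    le_trans (Finset.sum_nonneg fun j _ => hpos ⟨0, hn⟩ j) (hrow ⟨0, hn⟩)
  have hA : ‖A‖ ≤ 1 - r := by
    apply normRowsLe _ _ h1r
    intro i
    calc ∑ j, ‖A i j‖ = ∑ j, A i j :=
          Finset.sum_congr rfl fun j _ => by
            rw [Real.norm_eq_abs, abs_of_nonneg (hpos i j)]
      _ ≤ 1 - r := hrow i
  have hAlt : ‖A‖ < 1 := lt_of_le_of_lt hA (by linarith)
  have hU : IsUnit (1 - A) := isUnit_one_sub_of_norm_lt_one hAlt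
  have hUdet : IsUnit (1 - A).det := (Matrix.isUnit_iff_isUnit_det _).mp hU
  have hmul : (1 - A) * (1 - A)⁻¹ = 1 := Matrix.mul_nonsing_inv _ hUdet
  have hmul' : (1 - A)⁻¹ * (1 - A) = 1 := Matrix.nonsing_inv_mul _ hUdet
  set B := (1 - A)⁻¹ with hB
  have hBeq : B = 1 + A * B := by
    have h := hmul
    rw [sub_mul, one_mul, sub_eq_iff_eq_add] at h
    exact h
  have hpow : ∀ N : ℕ, ∀ i j, 0 ≤ (A ^ N) i j := by
    intro N
    induction N with
    | zero =>
      intro i j; rw [pow_zero]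
      by_cases h : i = j <;> simp [Matrix.one_apply, h]
    | succ N ih =>
      intro i j
      rw [pow_succ, Matrix.mul_apply]
      exact Finset.sum_nonneg fun k _ => mul_nonneg (ih i k) (hpos k j)
  have hkey : ∀ N : ℕ, B = (∑ k ∈ Finset.range N, A ^ k) + A ^ N * B := by
    intro N
    induction N with
    | zero => simp
    | succ N ih =>
      rw [Finset.sum_range_succ]
      calc B = (∑ k ∈ Finset.range N, A ^ k) + A ^ N * B := ih
        _ = (∑ k ∈ Finset.range N, A ^ k) + A ^ N * (1 + A * B) := by rw [← hBeq]
        _ = (∑ k ∈ Finset.range N, A ^ k) + (A ^ N + A ^ (N + 1) * B) := by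
              rw [mul_add, mul_one, pow_succ, mul_assoc]
        _ = _ := by abel
  have hAN : ∀ N : ℕ, ‖A ^ N‖ ≤ (1 - r) ^ N := by
    intro N
    induction N with
    | zero => simp
    | succ N ih =>
      rw [pow_succ, pow_succ]
      exact le_trans (norm_mul_le _ _)
        (mul_le_mul ih hA (norm_nonneg _) (pow_nonneg h1r _))
  have hBpos : ∀ i j, 0 ≤ B i j := by
    intro i j
    have hten : Filter.Tendsto (fun N : ℕ => -((1 - r) ^ N * ‖B‖)) Filter.atTop (nhds 0) := by
      have h1 := (tendsto_pow_atTop_nhds_zero_of_lt_one h1r (by linarith)).mul_const ‖B‖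
      simpa using h1.neg
    refine le_of_tendsto hten (Filter.Eventually.of_forall fun N => ?_)
    have h1 : B i j = (∑ k ∈ Finset.range N, A ^ k) i j + (A ^ N * B) i j := by
      conv_lhs => rw [hkey N]
      rfl
    have h2 : 0 ≤ (∑ k ∈ Finset.range N, A ^ k) i j := by
      rw [Matrix.sum_apply]
      exact Finset.sum_nonneg fun k _ => hpow k i j
    have h3 : |(A ^ N * B) i j| ≤ (1 - r) ^ N * ‖B‖ :=
      le_trans (abs_entry_le_norm _ i j)
        (le_trans (norm_mul_le _ _) (mul_le_mul_of_nonneg_right (hAN N) (norm_nonneg _)))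
    have h4 := (abs_le.mp h3).1
    rw [h1]; linarith
  exact ⟨hBpos, hmul, hmul', hA⟩


/-- Sensitivity upper bound: if two nonnegative cross-holdings matrices with
self-holdings at least `r > 0` differ, together with their diagonal
self-holdings matrices, by less than `ε` in ℓ1 operator norm, then the
market-valuation matrices differ by at most `ε / r`. -/
theorem sensitivity_upper_bound {n : ℕ}
    (C Ct : Matrix (Fin n) (Fin n) ℝ) (r ε : ℝ) (hr : 0 < r)
    (hCpos : ∀ i j, 0 ≤ C i j) (hCtpos : ∀ i j, 0 ≤ Ct i j)
    (hCcol : ∀ j, ∑ i, C i j ≤ 1 - r)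
    (hCtcol : ∀ j, ∑ i, Ct i j ≤ 1 - r)
    (Chat Chatt : Matrix (Fin n) (Fin n) ℝ)
    (hChat : Chat = Matrix.diagonal (fun j => 1 - ∑ i, C i j))
    (hChatt : Chatt = Matrix.diagonal (fun j => 1 - ∑ i, Ct i j))
    (hpert : opNormL1 (Ct - C) + opNormL1 (Chatt - Chat) < ε) :
    opNormL1 (Chatt * (1 - Ct)⁻¹ - Chat * (1 - C)⁻¹) ≤ ε / r := by
  rcases Nat.eq_zero_or_pos n with hn | hn
  · subst hn
    have hz : ∀ M : Matrix (Fin 0) (Fin 0) ℝ, opNormL1 M = 0 := fun M => by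
      unfold opNormL1; rw [iSup, Set.range_eq_empty, Real.sSup_empty]
    have hε : 0 < ε := by rw [hz, hz] at hpert; linarith
    rw [hz]; positivity
  have hne : Nonempty (Fin n) := ⟨⟨0, hn⟩⟩
  -- transposed matrices
  set A := Cᵀ with hAdef
  set At := Ctᵀ with hAtdef
  have hArow : ∀ i, ∑ j, A i j ≤ 1 - r := fun i => hCcol i
  have hAtrow : ∀ i, ∑ j, At i j ≤ 1 - r := fun i => hCtcol i
  obtain ⟨hBpos, hmulB, hmulB', hnA⟩ :=
    neumann hn r hr A (fun i j => hCpos j i) hArow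
  obtain ⟨hBtpos, hmulBt, hmulBt', hnAt⟩ :=
    neumann hn r hr At (fun i j => hCtpos j i) hAtrow
  set B := (1 - A)⁻¹ with hBdef
  set Bt := (1 - At)⁻¹ with hBtdef
  -- the target transposed
  have hDT : Chatᵀ = Chat := by rw [hChat, Matrix.diagonal_transpose]
  have hDtT : Chattᵀ = Chatt := by rw [hChatt, Matrix.diagonal_transpose]
  have hT : (Chatt * (1 - Ct)⁻¹ - Chat * (1 - C)⁻¹)ᵀ
      = Bt * Chatt - B * Chat := by
    rw [Matrix.transpose_sub, Matrix.transpose_mul, Matrix.transpose_mul,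
      Matrix.transpose_nonsing_inv, Matrix.transpose_nonsing_inv,
      Matrix.transpose_sub, Matrix.transpose_sub, Matrix.transpose_one,
      hDT, hDtT]
  -- key identity
  have hmid : Bt * (At - A) * B = Bt - B := by
    have e : At - A = (1 - A) - (1 - At) := by abel
    rw [e, mul_sub, sub_mul, mul_assoc, hmulB, mul_one, hmulBt', one_mul]
  have hkey : Bt * Chatt - B * Chat
      = Bt * ((Chatt - Chat) + (At - A) * (B * Chat)) := by
    rw [mul_add, mul_sub, ← mul_assoc, ← mul_assoc, hmid, sub_mul]
    abel
  -- norm bounds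
  have hBt1 : ‖Bt‖ ≤ 1 + (1 - r) * ‖Bt‖ := by
    have hBteq : Bt = 1 + At * Bt := by
      have h := hmulBt
      rw [sub_mul, one_mul, sub_eq_iff_eq_add] at h
      exact h
    calc ‖Bt‖ = ‖(1 : Matrix (Fin n) (Fin n) ℝ) + At * Bt‖ := by rw [← hBteq]
      _ ≤ ‖(1 : Matrix (Fin n) (Fin n) ℝ)‖ + ‖At * Bt‖ := norm_add_le _ _
      _ ≤ 1 + (1 - r) * ‖Bt‖ := by
          have h1 : ‖(1 : Matrix (Fin n) (Fin n) ℝ)‖ = 1 := norm_one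
          have h2 := norm_mul_le At Bt
          nlinarith [norm_nonneg Bt]
  have hBtr : ‖Bt‖ ≤ 1 / r := by
    rw [le_div_iff₀ hr]
    nlinarith [norm_nonneg Bt]
  -- ‖B * Chat‖ ≤ 1
  have hd : ∀ j, (0:ℝ) ≤ 1 - ∑ i, C i j := fun j => by
    have := hCcol j; linarith
  have hBD : ‖B * Chat‖ ≤ 1 := by
    apply normRowsLe _ _ zero_le_one
    intro i
    have hentry : ∀ j, (B * Chat) i j = B i j * (1 - ∑ k, C k j) := by
      intro j
      rw [hChat, Matrix.mul_diagonal]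
    have hds : ∀ j, (1 - ∑ k, C k j) = ∑ k, (1 - A) j k := by
      intro j
      have h : ∑ k, (1 - A) j k = ∑ k, ((1 : Matrix (Fin n) (Fin n) ℝ) j k - A j k) := rfl
      rw [h, Finset.sum_sub_distrib]
      simp [Matrix.one_apply, hAdef]
    have hrsum : ∑ j, (B * Chat) i j = 1 := by
      calc ∑ j, (B * Chat) i j = ∑ j, B i j * (∑ k, (1 - A) j k) := by
            refine Finset.sum_congr rfl fun j _ => ?_
            rw [hentry j, hds j]
        _ = ∑ j, ∑ k, B i j * (1 - A) j k :=
            Finset.sum_congr rfl fun j _ => Finset.mul_sum _ _ _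
        _ = ∑ k, ∑ j, B i j * (1 - A) j k := Finset.sum_comm
        _ = ∑ k, (B * (1 - A)) i k := by
            refine Finset.sum_congr rfl fun k _ => ?_
            rw [Matrix.mul_apply]
        _ = ∑ k, (1 : Matrix (Fin n) (Fin n) ℝ) i k := by rw [hmulB']
        _ = 1 := by simp [Matrix.one_apply]
    calc ∑ j, ‖(B * Chat) i j‖ = ∑ j, (B * Chat) i j := by
          refine Finset.sum_congr rfl fun j _ => ?_
          rw [Real.norm_eq_abs, abs_of_nonneg]
          rw [hentry j]
          exact mul_nonneg (hBpos i j) (hd j)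
      _ = 1 := hrsum
      _ ≤ 1 := le_rfl
  -- assemble
  rw [opNormL1_eq hn, hT, hkey]
  have ha : opNormL1 (Ct - C) = ‖At - A‖ := by
    rw [opNormL1_eq hn, Matrix.transpose_sub]
  have hb : opNormL1 (Chatt - Chat) = ‖Chatt - Chat‖ := by
    rw [opNormL1_eq hn, Matrix.transpose_sub, hDT, hDtT]
  rw [ha, hb] at hpert
  have hε : ‖Chatt - Chat‖ + ‖At - A‖ * ‖B * Chat‖ ≤ ε := by
    nlinarith [norm_nonneg (At - A), norm_nonneg (Chatt - Chat)]
  calc ‖Bt * ((Chatt - Chat) + (At - A) * (B * Chat))‖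
      ≤ ‖Bt‖ * ‖(Chatt - Chat) + (At - A) * (B * Chat)‖ := norm_mul_le _ _
    _ ≤ ‖Bt‖ * (‖Chatt - Chat‖ + ‖At - A‖ * ‖B * Chat‖) := by
        refine mul_le_mul_of_nonneg_left ?_ (norm_nonneg _)
        exact le_trans (norm_add_le _ _) (by gcongr; exact norm_mul_le _ _)
    _ ≤ (1 / r) * ε := by
        refine mul_le_mul hBtr hε ?_ (by positivity)
        positivity
    _ = ε / r := by rw [one_div, inv_mul_eq_div]
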